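/- Let R be a finite commutative ring and A, B subspaces of R^n such that dim(A+B) = dim A + dim B − dim(A ∩ B). Then (A ∩ B)^⊥ = A^⊥ + B^⊥ and (A + B)^⊥ = A^⊥ ∩ B^⊥. -/

import Mathlib

open Matrix

/-- A submodule of `R^n` is a `k`-subspace if it is generated by the rows of a
`k × n` matrix with a right inverse. -/
def IsSubspace (R : Type*) [CommRing R] (k n : ℕ)
    (P : Submodule R (Fin n → R)) : Prop :=
  ∃ A : Matrix (Fin k) (Fin n) R, (∃ B : Matrix (Fin n) (Fin k) R, A * B = 1) ∧
    P = Submodule.span R (Set.range fun i : Fin k => A i)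

/-- The dimension of a submodule `V` of `R^n`: the maximum size of a unimodular
subset of `V`, i.e. of a family of vectors of `V` forming a matrix with a right
inverse. -/
noncomputable def subDim {R : Type*} [CommRing R] {n : ℕ}
    (V : Submodule R (Fin n → R)) : ℕ :=
  sSup {k | ∃ A : Matrix (Fin k) (Fin n) R,
    (∀ i : Fin k, A i ∈ V) ∧ ∃ B : Matrix (Fin n) (Fin k) R, A * B = 1}

open Matrix in
/-- The orthogonal complement of a submodule of `R^n` with respect to the
standard bilinear form. -/
def perp {R : Type*} [CommRing R] {n : ℕ}
    (P : Submodule R (Fin n → R)) : Submodule R (Fin n → R) where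
  carrier := {y | ∀ x ∈ P, y ⬝ᵥ x = 0}
  add_mem' := by
    intro a b ha hb x hx
    simp [add_dotProduct, ha x hx, hb x hx]
  zero_mem' := by
    intro x hx
    simp
  smul_mem' := by
    intro c a ha x hx
    simp [smul_dotProduct, ha x hx]

section Aux

variable {R : Type*} [CommRing R] {n : ℕ}

lemma mem_perp_iff {P : Submodule R (Fin n → R)} {y : Fin n → R} :
    y ∈ perp P ↔ ∀ x ∈ P, y ⬝ᵥ x = 0 := Iff.rfl

lemma perp_antitone {P Q : Submodule R (Fin n → R)} (h : P ≤ Q) : perp Q ≤ perp P :=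
  fun _ hy x hx => hy x (h hx)

lemma perp_sup (P Q : Submodule R (Fin n → R)) : perp (P ⊔ Q) = perp P ⊓ perp Q := by
  refine le_antisymm (le_inf (perp_antitone le_sup_left) (perp_antitone le_sup_right)) ?_
  rintro y ⟨h1, h2⟩ x hx
  obtain ⟨u, hu, v, hv, rfl⟩ := Submodule.mem_sup.mp hx
  rw [dotProduct_add, h1 u hu, h2 v hv, add_zero]

lemma perp_span_rows {k : ℕ} (M : Matrix (Fin k) (Fin n) R) :
    perp (Submodule.span R (Set.range fun i : Fin k => M i)) = LinearMap.ker M.mulVecLin := by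
  ext y
  constructor
  · intro hy
    rw [LinearMap.mem_ker]
    funext i
    have := hy (M i) (Submodule.subset_span ⟨i, rfl⟩)
    rw [dotProduct_comm] at this
    exact this
  · intro hy x hx
    rw [LinearMap.mem_ker] at hy
    have hrow : ∀ i, y ⬝ᵥ M i = 0 := fun i => by
      rw [dotProduct_comm]; exact congrFun hy i
    induction hx using Submodule.span_induction with
    | mem x hx => obtain ⟨i, rfl⟩ := hx; exact hrow i
    | zero => simp
    | add u v _ _ hu hv => rw [dotProduct_add, hu, hv, add_zero]
    | smul c u _ hu => rw [dotProduct_smul, hu, smul_zero]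

lemma card_ker_mul [Fintype R] {k : ℕ} (M : Matrix (Fin k) (Fin n) R)
    (N : Matrix (Fin n) (Fin k) R) (h : M * N = 1) :
    Nat.card (LinearMap.ker M.mulVecLin) * Fintype.card R ^ k = Fintype.card R ^ n := by
  have hsurj : Function.Surjective M.mulVecLin := by
    intro z
    exact ⟨N *ᵥ z, by simp [mulVecLin_apply, mulVec_mulVec, h]⟩
  have h1 := Submodule.card_eq_card_quotient_mul_card (LinearMap.ker M.mulVecLin)
  rw [Nat.card_congr (LinearMap.quotKerEquivOfSurjective M.mulVecLin hsurj).toEquiv] at h1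
  have hn : Nat.card (Fin n → R) = Fintype.card R ^ n := by simp [Nat.card_eq_fintype_card]
  have hk : Nat.card (Fin k → R) = Fintype.card R ^ k := by simp [Nat.card_eq_fintype_card]
  rw [hn, hk] at h1
  omega

/-- If `M * N = 1` then `mulVecLin N` is injective. -/
lemma mulVecLin_right_inv_injective {k : ℕ} {M : Matrix (Fin k) (Fin n) R}
    {N : Matrix (Fin n) (Fin k) R} (h : M * N = 1) :
    Function.Injective N.mulVecLin := by
  intro y z hyz
  have : M *ᵥ (N *ᵥ y) = M *ᵥ (N *ᵥ z) := by
    simpa only [mulVecLin_apply] using congrArg (M *ᵥ ·) hyz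
  simpa [mulVec_mulVec, h] using this

/-- The defining set of `subDim`. -/
def dimSet (V : Submodule R (Fin n → R)) : Set ℕ :=
  {k | ∃ A : Matrix (Fin k) (Fin n) R,
    (∀ i : Fin k, A i ∈ V) ∧ ∃ B : Matrix (Fin n) (Fin k) R, A * B = 1}

lemma subDim_eq_sSup (V : Submodule R (Fin n → R)) : subDim V = sSup (dimSet V) := rfl

lemma zero_mem_dimSet (V : Submodule R (Fin n → R)) : 0 ∈ dimSet V :=
  ⟨0, fun i => i.elim0, 0, Subsingleton.elim _ _⟩

lemma dimSet_bddAbove [Nontrivial R] (V : Submodule R (Fin n → R)) :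
    ∀ k ∈ dimSet V, k ≤ n := by
  rintro k ⟨A, -, B, hB⟩
  exact le_of_fin_injective R B.mulVecLin (mulVecLin_right_inv_injective hB)

lemma dimSet_le_of_span [Nontrivial R] {k₀ : ℕ} (M : Matrix (Fin k₀) (Fin n) R)
    {V : Submodule R (Fin n → R)}
    (hV : V ≤ Submodule.span R (Set.range fun i : Fin k₀ => M i)) :
    ∀ k ∈ dimSet V, k ≤ k₀ := by
  rintro k ⟨A, hrows, B, hB⟩
  choose c hc using fun i => (Submodule.mem_span_range_iff_exists_fun R).mp (hV (hrows i))
  have hCM : (Matrix.of c) * M = A := by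
    ext i t
    rw [Matrix.mul_apply]
    have := congrFun (hc i) t
    simpa [Finset.sum_apply] using this
  have h1 : (Matrix.of c) * (M * B) = 1 := by rw [← Matrix.mul_assoc, hCM, hB]
  exact le_of_fin_injective R (M * B).mulVecLin (mulVecLin_right_inv_injective h1)

lemma subDim_of_isSubspace [Nontrivial R] {k : ℕ} {V : Submodule R (Fin n → R)}
    (h : IsSubspace R k n V) : subDim V = k := by
  obtain ⟨M, ⟨N, hMN⟩, rfl⟩ := h
  refine le_antisymm (csSup_le ⟨0, zero_mem_dimSet _⟩ (dimSet_le_of_span M le_rfl)) ?_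
  refine le_csSup ⟨n, fun j hj => dimSet_bddAbove _ j hj⟩ ?_
  exact ⟨M, fun i => Submodule.subset_span ⟨i, rfl⟩, N, hMN⟩

lemma subDim_mono [Nontrivial R] {V W : Submodule R (Fin n → R)} (h : V ≤ W) :
    subDim V ≤ subDim W := by
  refine csSup_le_csSup ⟨n, fun j hj => dimSet_bddAbove _ j hj⟩ ⟨0, zero_mem_dimSet _⟩ ?_
  rintro k ⟨A, hrows, hinv⟩
  exact ⟨A, fun i => h (hrows i), hinv⟩

lemma subDim_mem [Nontrivial R] (V : Submodule R (Fin n → R)) : subDim V ∈ dimSet V :=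
  Nat.sSup_mem ⟨0, zero_mem_dimSet V⟩ ⟨n, fun j hj => dimSet_bddAbove _ j hj⟩

lemma card_perp_mul_le [Fintype R] [Nontrivial R] (V : Submodule R (Fin n → R)) :
    Nat.card (perp V) * Fintype.card R ^ (subDim V) ≤ Fintype.card R ^ n := by
  obtain ⟨M, hrows, N, hMN⟩ := subDim_mem V
  have hsub : perp V ≤ LinearMap.ker M.mulVecLin := by
    rw [← perp_span_rows]
    exact perp_antitone (Submodule.span_le.mpr (Set.range_subset_iff.mpr hrows))
  have hcard : Nat.card (perp V) ≤ Nat.card (LinearMap.ker M.mulVecLin) := by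
    have hinj : Function.Injective
        (fun x : perp V => (⟨x.1, hsub x.2⟩ : LinearMap.ker M.mulVecLin)) := by
      intro x y hxy
      simp only [Subtype.mk.injEq] at hxy
      exact Subtype.ext hxy
    exact Nat.card_le_card_of_injective _ hinj
  calc Nat.card (perp V) * Fintype.card R ^ (subDim V)
      ≤ Nat.card (LinearMap.ker M.mulVecLin) * Fintype.card R ^ (subDim V) :=
        Nat.mul_le_mul_right _ hcard
    _ = Fintype.card R ^ n := card_ker_mul M N hMN

lemma card_sup_mul_card_inf [Fintype R] (X Y : Submodule R (Fin n → R)) :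
    Nat.card (X ⊔ Y : Submodule R (Fin n → R)) * Nat.card (X ⊓ Y : Submodule R (Fin n → R))
      = Nat.card X * Nat.card Y := by
  have e := LinearMap.quotientInfEquivSupQuotient X Y
  have h1 := Submodule.card_eq_card_quotient_mul_card (Submodule.comap X.subtype (X ⊓ Y))
  have h2 := Submodule.card_eq_card_quotient_mul_card (Submodule.comap (X ⊔ Y).subtype Y)
  have e1 : Nat.card (Submodule.comap X.subtype (X ⊓ Y)) = Nat.card (X ⊓ Y : Submodule R _) :=
    Nat.card_congr (Submodule.comapSubtypeEquivOfLe inf_le_left).toEquiv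
  have e2 : Nat.card (Submodule.comap (X ⊔ Y).subtype Y) = Nat.card Y :=
    Nat.card_congr (Submodule.comapSubtypeEquivOfLe le_sup_right).toEquiv
  have e3 : Nat.card (X ⧸ Submodule.comap X.subtype (X ⊓ Y))
      = Nat.card ((X ⊔ Y : Submodule R _) ⧸ Submodule.comap (X ⊔ Y).subtype Y) :=
    Nat.card_congr e.toEquiv
  rw [e1, e3] at h1
  rw [e2] at h2
  -- h1 : card X = card Q2 * card (X ⊓ Y), h2 : card (X ⊔ Y) = card Y * card Q2
  rw [h1, h2]
  ring

lemma eq_of_le_of_card_le [Fintype R] {P Q : Submodule R (Fin n → R)} (h : P ≤ Q)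
    (hc : Nat.card Q ≤ Nat.card P) : P = Q := by
  refine SetLike.coe_injective
    (Set.eq_of_subset_of_ncard_le h ?_ (Set.toFinite _))
  rwa [← Nat.card_coe_set_eq, ← Nat.card_coe_set_eq]

end Aux

theorem perp_inf_sup {R : Type*} [CommRing R] [Fintype R] {n : ℕ}
    (A B : Submodule R (Fin n → R))
    (hA : ∃ k, IsSubspace R k n A) (hB : ∃ k, IsSubspace R k n B)
    (hdim : subDim (A ⊔ B) = subDim A + subDim B - subDim (A ⊓ B)) :
    perp (A ⊓ B) = perp A ⊔ perp B ∧ perp (A ⊔ B) = perp A ⊓ perp B := by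
  refine ⟨?_, perp_sup A B⟩
  rcases subsingleton_or_nontrivial R with hR | hR
  · have : ∀ P Q : Submodule R (Fin n → R), P = Q := by
      intro P Q
      have : Subsingleton (Fin n → R) := inferInstance
      ext x
      simp [Subsingleton.elim x 0]
    exact this _ _
  -- nontrivial case
  obtain ⟨ka, hAs⟩ := hA
  obtain ⟨kb, hBs⟩ := hB
  set q := Fintype.card R with hq
  have hqpos : 0 < q := Fintype.card_pos
  have ha : subDim A = ka := subDim_of_isSubspace hAs
  have hb : subDim B = kb := subDim_of_isSubspace hBs
  set d := subDim (A ⊓ B) with hd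
  set s := subDim (A ⊔ B) with hs
  have hdle : d ≤ ka := ha ▸ subDim_mono inf_le_left
  have hsd : s + d = ka + kb := by
    rw [ha, hb] at hdim
    omega
  -- exact cardinalities for perp A and perp B
  have hX : Nat.card (perp A) * q ^ ka = q ^ n := by
    obtain ⟨MA, ⟨NA, hMN⟩, hspan⟩ := hAs
    rw [hspan, perp_span_rows]
    exact card_ker_mul MA NA hMN
  have hY : Nat.card (perp B) * q ^ kb = q ^ n := by
    obtain ⟨MB, ⟨NB, hMN⟩, hspan⟩ := hBs
    rw [hspan, perp_span_rows]
    exact card_ker_mul MB NB hMN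
  have hQ : Nat.card (perp (A ⊔ B)) * q ^ s ≤ q ^ n := card_perp_mul_le _
  have hP : Nat.card (perp (A ⊓ B)) * q ^ d ≤ q ^ n := card_perp_mul_le _
  have h2 : Nat.card (perp A ⊔ perp B : Submodule R (Fin n → R)) *
      Nat.card (perp A ⊓ perp B : Submodule R (Fin n → R))
      = Nat.card (perp A) * Nat.card (perp B) := card_sup_mul_card_inf _ _
  have hQeq : Nat.card (perp A ⊓ perp B : Submodule R (Fin n → R))
      = Nat.card (perp (A ⊔ B)) := by rw [perp_sup]
  have hle : perp A ⊔ perp B ≤ perp (A ⊓ B) :=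
    sup_le (perp_antitone inf_le_left) (perp_antitone inf_le_right)
  refine (eq_of_le_of_card_le hle ?_).symm
  -- cardinality comparison
  set cP := Nat.card (perp (A ⊓ B))
  set cS := Nat.card (perp A ⊔ perp B : Submodule R (Fin n → R))
  set cQ := Nat.card (perp (A ⊔ B))
  have hQpos : 0 < cQ := Nat.card_pos
  have key : cP * (cQ * q ^ (s + d)) ≤ cS * (cQ * q ^ (s + d)) := by
    have lhs : cP * (cQ * q ^ (s + d)) = (cP * q ^ d) * (cQ * q ^ s) := by
      rw [pow_add]; ring
    have rhs : cS * (cQ * q ^ (s + d)) = cS * cQ * q ^ (ka + kb) := by rw [hsd]; ring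
    have hmid : cS * cQ * q ^ (ka + kb) = q ^ n * q ^ n := by
      rw [← hQeq] at *
      calc cS * Nat.card (perp A ⊓ perp B : Submodule R (Fin n → R)) * q ^ (ka + kb)
          = (Nat.card (perp A) * q ^ ka) * (Nat.card (perp B) * q ^ kb) := by
            rw [h2, pow_add]; ring
        _ = q ^ n * q ^ n := by rw [hX, hY]
    rw [lhs, rhs, hmid]
    exact Nat.mul_le_mul hP hQ
  have hpos : 0 < cQ * q ^ (s + d) := Nat.mul_pos hQpos (Nat.pow_pos hqpos)
  exact Nat.le_of_mul_le_mul_right (by simpa [mul_comm] using key) hpos
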